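/- Let (X,d) be a finite ultrametric space viewed as a complete weighted graph with edge weights w({x,y}) = d(x,y), and let T be a minimum weight spanning tree of this graph. Then for every pair of distinct points x, y, the distance d(x,y) equals the maximum weight of an edge on the unique path in T connecting x and y. -/

import Mathlib

/-- The weight of an edge of the complete graph on a metric space. -/
noncomputable def edgeWeight (X : Type*) [MetricSpace X] : Sym2 X → ℝ :=
  Sym2.lift ⟨fun x y => dist x y, fun x y => dist_comm x y⟩

/-- The total weight of (the edges of) a graph on a finite metric space. -/
noncomputable def graphWeight {X : Type*} [MetricSpace X] [Fintype X]
    (G : SimpleGraph X) : ℝ :=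
  ∑ e ∈ G.edgeSet.toFinite.toFinset, edgeWeight X e

/-- A minimum weight spanning tree of the complete weighted graph on a finite
metric space `X` with weights given by the metric: a tree on the vertex set `X`
whose total weight is minimal among all such trees. -/
def IsMST {X : Type*} [MetricSpace X] [Fintype X] (T : SimpleGraph X) : Prop :=
  T.IsTree ∧ ∀ G : SimpleGraph X, G.IsTree → graphWeight T ≤ graphWeight G

/-- The path graph `x 0 — x 1 — ⋯ — x (n-1)` on `X`. -/
def pathGraphOn {X : Type*} (n : ℕ) (x : ℕ → X) : SimpleGraph X :=
  SimpleGraph.fromRel (fun u v => ∃ i : ℕ, i + 1 < n ∧ u = x i ∧ v = x (i + 1))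

open SimpleGraph

@[simp] lemma edgeWeight_mk {X : Type*} [MetricSpace X] (x y : X) :
    edgeWeight X s(x,y) = dist x y := rfl

/-- After deleting one edge from a connected graph, every vertex is still reachable
from one of the two endpoints of the deleted edge (auxiliary induction). -/
lemma side_aux {V : Type*} {T : SimpleGraph V} {u v : V} :
    ∀ {a b : V}, T.Walk a b →
      ((T.deleteEdges {s(u,v)}).Reachable b u ∨ (T.deleteEdges {s(u,v)}).Reachable b v) →
      ((T.deleteEdges {s(u,v)}).Reachable a u ∨ (T.deleteEdges {s(u,v)}).Reachable a v)
  | _, _, SimpleGraph.Walk.nil, h => h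
  | a, b, SimpleGraph.Walk.cons (v := c) h q, hb => by
      have hstep := side_aux q hb
      by_cases he : s(a, c) = s(u, v)
      · rw [Sym2.eq_iff] at he
        rcases he with ⟨rfl, rfl⟩ | ⟨rfl, rfl⟩
        · exact Or.inl (Reachable.refl _)
        · exact Or.inr (Reachable.refl _)
      · have hadj : (T.deleteEdges {s(u,v)}).Adj a c := by
          rw [SimpleGraph.deleteEdges_adj]
          exact ⟨h, by simpa using he⟩
        rcases hstep with h' | h'
        · exact Or.inl (hadj.reachable.trans h')
        · exact Or.inr (hadj.reachable.trans h')

/-- After deleting one edge from a connected graph, every vertex is still reachable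
from one of the two endpoints of the deleted edge. -/
lemma side {V : Type*} {T : SimpleGraph V} (hc : T.Connected) (u v a : V) :
    (T.deleteEdges {s(u,v)}).Reachable a u ∨ (T.deleteEdges {s(u,v)}).Reachable a v := by
  obtain ⟨w⟩ := hc.preconnected a u
  exact side_aux w (Or.inl (Reachable.refl _))

/-- If the unique path between `x` and `y` in a tree uses edge `e`, then after
deleting `e` the vertices `x` and `y` are no longer reachable from each other. -/
lemma not_reach {V : Type*} {T : SimpleGraph V} (hT : T.IsTree) {x y : V} {p : T.Walk x y}
    (hp : p.IsPath) {e : Sym2 V} (he : e ∈ p.edges) :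
    ¬ (T.deleteEdges {e}).Reachable x y := by
  rintro ⟨w⟩
  classical
  obtain ⟨q, hq⟩ : ∃ q : (T.deleteEdges {e}).Walk x y, q.IsPath := ⟨w.toPath.1, w.toPath.2⟩
  have hsub : ∀ f ∈ q.edges, f ∈ T.edgeSet := fun f hf => by
    have := q.edges_subset_edgeSet hf
    rw [edgeSet_deleteEdges] at this
    exact this.1
  have hq' : (q.transfer T hsub).IsPath := hq.transfer _
  have huniq := hT.existsUnique_path x y
  have : q.transfer T hsub = p := huniq.unique hq' hp
  have heq : e ∈ q.edges := by
    rw [← Walk.edges_transfer q hsub, this]; exact he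
  have := q.edges_subset_edgeSet heq
  rw [edgeSet_deleteEdges] at this
  exact this.2 rfl

/-- The exchange argument: if in an MST, `x` is attached to `u` and `y` to `v`
after deleting the tree edge `{u, v}`, then `d(u,v) ≤ d(x,y)`. -/
lemma exchange {X : Type*} [MetricSpace X] [Fintype X] {T : SimpleGraph X} (hT : IsMST T)
    {x y u v : X} (hxy : x ≠ y) (hnadj : ¬ T.Adj x y) (huv : T.Adj u v)
    (hxu : (T.deleteEdges {s(u,v)}).Reachable x u)
    (hyv : (T.deleteEdges {s(u,v)}).Reachable y v) : dist u v ≤ dist x y := by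
  classical
  by_contra hlt
  push_neg at hlt
  set D := T.deleteEdges {s(u,v)} with hD
  set G := D ⊔ edge x y with hG
  have hDT : D ≤ T := T.deleteEdges_le _
  have hGxy : G.Adj x y := Or.inr ((edge_adj x y x y).mpr ⟨Or.inl ⟨rfl, rfl⟩, hxy⟩)
  -- the deleted edge is a bridge of T
  have hbr : ¬ D.Reachable u v := by
    have := (isAcyclic_iff_forall_adj_isBridge.mp hT.1.IsAcyclic) huv
    exact isBridge_iff.mp this
  -- connectivity of G
  have hconn : G.Connected := by
    haveI : Nonempty X := ⟨x⟩
    refine Connected.mk fun a b => ?_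
    have key : ∀ a : X, G.Reachable a x := by
      intro a
      rcases side hT.1.isConnected u v a with h | h
      · exact (h.trans hxu.symm).mono le_sup_left
      · exact ((h.trans hyv.symm).mono le_sup_left).trans hGxy.symm.reachable
    exact (key a).trans (key b).symm
  -- s(x,y) not an edge of T
  have hxyT : s(x,y) ∉ T.edgeSet := hnadj
  -- deleting s(x,y) from G gives back D
  have hdel : G.deleteEdges {s(x,y)} = D := by
    ext a b
    simp only [deleteEdges_adj, hG, sup_adj, edge_adj, Set.mem_singleton_iff]
    constructor
    · rintro ⟨h | h, hne⟩
      · exact h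
      · exact absurd (Sym2.eq_iff.mpr (by tauto)) hne
    · intro h
      refine ⟨Or.inl h, fun hc => hxyT ?_⟩
      rw [← hc]
      exact h.1
  -- s(x,y) is a bridge of G
  have hGbr : G.IsBridge s(x,y) := by
    rw [isBridge_iff]
    rw [hdel]
    intro hr
    exact hbr ((hxu.symm.trans hr).trans hyv)
  -- G is acyclic
  have hacyc : G.IsAcyclic := by
    intro a c hc
    have hnot : s(x,y) ∉ c.edges :=
      (isBridge_iff_adj_and_forall_cycle_notMem hGxy).mp hGbr c hc
    have hsub : ∀ f ∈ c.edges, f ∈ T.edgeSet := by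
      intro f hf
      have hfG : f ∈ G.edgeSet := c.edges_subset_edgeSet hf
      rw [hG, edgeSet_sup, edge_edgeSet_of_ne hxy] at hfG
      rcases hfG with hfD | hfx
      · rw [hD, edgeSet_deleteEdges] at hfD
        exact hfD.1
      · exact absurd (hfx ▸ hf) hnot
    exact hT.1.IsAcyclic _ (hc.transfer hsub)
  have hGtree : G.IsTree := ⟨hconn, hacyc⟩
  -- edge set computation
  have hE : G.edgeSet.toFinite.toFinset
      = insert s(x,y) ((T.edgeSet.toFinite.toFinset).erase s(u,v)) := by
    ext f
    simp only [Set.Finite.mem_toFinset, Finset.mem_insert, Finset.mem_erase, hG, edgeSet_sup,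
      edge_edgeSet_of_ne hxy, hD, edgeSet_deleteEdges, Set.mem_union, Set.mem_diff,
      Set.mem_singleton_iff]
    tauto
  have hxy_ne : s(x,y) ∉ (T.edgeSet.toFinite.toFinset).erase s(u,v) := by
    simp only [Finset.mem_erase, Set.Finite.mem_toFinset]
    exact fun h => hxyT h.2
  have huvT : s(u,v) ∈ T.edgeSet.toFinite.toFinset := by
    simpa using huv
  have hw : graphWeight G = dist x y + (graphWeight T - dist u v) := by
    rw [graphWeight, hE, Finset.sum_insert hxy_ne, Finset.sum_erase_eq_sub huvT]
    simp [graphWeight]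
  have := hT.2 G hGtree
  rw [hw] at this
  linarith

/-- Each edge on the unique MST path between `x` and `y` has weight at most `d(x,y)`. -/
lemma edge_le_dist {X : Type*} [MetricSpace X] [Fintype X] {T : SimpleGraph X} (hT : IsMST T)
    {x y : X} (hxy : x ≠ y) {p : T.Walk x y} (hp : p.IsPath)
    {e : Sym2 X} (he : e ∈ p.edges) : edgeWeight X e ≤ dist x y := by
  induction e using Sym2.ind with
  | _ u v =>
  rw [edgeWeight_mk]
  have huv : T.Adj u v := p.edges_subset_edgeSet he
  by_cases hadj : T.Adj x y
  · -- the path is the single edge x—y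
    have hps : p = (Path.singleton hadj).1 :=
      (hT.1.existsUnique_path x y).unique hp (Path.singleton hadj).2
    rw [hps] at he
    have : s(u,v) = s(x,y) := by simpa [Path.singleton] using he
    rw [Sym2.eq_iff] at this
    rcases this with ⟨rfl, rfl⟩ | ⟨rfl, rfl⟩
    · exact le_refl _
    · exact le_of_eq (_root_.dist_comm u v)
  · have hnr : ¬ (T.deleteEdges {s(u,v)}).Reachable x y := not_reach hT.1 hp he
    rcases side hT.1.isConnected u v x with hx | hx <;>
      rcases side hT.1.isConnected u v y with hy | hy
    · exact absurd (hx.trans hy.symm) hnr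
    · exact exchange hT hxy hadj huv hx hy
    · have hx' : (T.deleteEdges {s(v,u)}).Reachable x v := by rwa [Sym2.eq_swap]
      have hy' : (T.deleteEdges {s(v,u)}).Reachable y u := by rwa [Sym2.eq_swap]
      have := exchange hT hxy hadj huv.symm hx' hy'
      rwa [_root_.dist_comm]
    · exact absurd (hx.trans hy.symm) hnr

/-- Ultrametric inequality along a walk: the distance between the endpoints is at
most the maximum edge weight. -/
lemma dist_le_max {X : Type*} [MetricSpace X]
    (hu : ∀ x y z : X, dist x y ≤ max (dist x z) (dist z y)) {T : SimpleGraph X} :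
    ∀ {a b : X} (w : T.Walk a b), a ≠ b →
      (dist a b : WithBot ℝ) ≤ (w.edges.map (edgeWeight X)).maximum
  | _, _, SimpleGraph.Walk.nil, hab => absurd rfl hab
  | a, b, SimpleGraph.Walk.cons (v := c) h q, hab => by
    rw [Walk.edges_cons, List.map_cons, List.maximum_cons]
    by_cases hcb : c = b
    · subst hcb
      exact le_trans (le_of_eq rfl) (le_max_left _ _)
    · have h2 := dist_le_max hu q hcb
      have h1 : (dist a b : ℝ) ≤ max (dist a c) (dist c b) := hu a b c
      calc (dist a b : WithBot ℝ) ≤ ((max (dist a c) (dist c b) : ℝ) : WithBot ℝ) :=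
            WithBot.coe_le_coe.mpr h1
        _ = max ((dist a c : ℝ) : WithBot ℝ) ((dist c b : ℝ) : WithBot ℝ) := WithBot.coe_max _ _
        _ ≤ max ((edgeWeight X s(a,c) : ℝ) : WithBot ℝ) (q.edges.map (edgeWeight X)).maximum :=
            max_le_max (le_of_eq rfl) h2

/-- In a finite ultrametric space, the distance between two distinct points equals
the maximum weight of an edge on the unique path joining them in any minimum
weight spanning tree. -/
theorem dist_eq_max_edge_on_mst_path {X : Type*} [MetricSpace X] [Fintype X]
    (hu : ∀ x y z : X, dist x y ≤ max (dist x z) (dist z y))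
    (T : SimpleGraph X) (hT : IsMST T) (x y : X) (hxy : x ≠ y)
    (p : T.Walk x y) (hp : p.IsPath) :
    (p.edges.map (edgeWeight X)).maximum = (dist x y : WithBot ℝ) := by
  refine le_antisymm ?_ (dist_le_max hu p hxy)
  apply List.maximum_le_of_forall_le
  intro a ha
  rw [List.mem_map] at ha
  obtain ⟨e, he, rfl⟩ := ha
  exact WithBot.coe_le_coe.mpr (edge_le_dist hT hxy hp he)
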